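/- A non-nilpotent δ-derivation of a finite-dimensional perfect complex Lie algebra has δ algebraic over ℚ. -/

import Mathlib

open Module Polynomial

set_option synthInstance.maxHeartbeats 400000
set_option maxHeartbeats 1000000

section Aux

variable {L : Type*} [LieRing L] [LieAlgebra ℂ L]

/-- Key bracket relation for δ-derivations on kernels of powers. -/
lemma delta_bracket_ker (δ : ℂ) (D : Module.End ℂ L)
    (hD : ∀ x y : L, D ⁅x, y⁆ = δ • ⁅D x, y⁆ + δ • ⁅x, D y⁆) (l m : ℂ) :
    ∀ (k n p : ℕ) (x y : L), n + p ≤ k →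
      ((D - l • 1) ^ n) x = 0 → ((D - m • 1) ^ p) y = 0 →
      ((D - (δ * (l + m)) • 1) ^ k) ⁅x, y⁆ = 0 := by
  intro k
  induction k with
  | zero =>
    intro n p x y hnp hx hy
    obtain rfl : n = 0 := by omega
    simp only [pow_zero, Module.End.one_apply] at hx ⊢
    rw [hx, zero_lie]
  | succ k ih =>
    intro n p x y hnp hx hy
    match n, p with
    | 0, p =>
      simp only [pow_zero, Module.End.one_apply] at hx
      rw [hx, zero_lie, map_zero]
    | n + 1, 0 =>
      simp only [pow_zero, Module.End.one_apply] at hy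
      rw [hy, lie_zero, map_zero]
    | n + 1, p + 1 =>
      have hE : (D - (δ * (l + m)) • 1) ⁅x, y⁆ =
          δ • ⁅(D - l • (1 : Module.End ℂ L)) x, y⁆ +
          δ • ⁅x, (D - m • (1 : Module.End ℂ L)) y⁆ := by
        simp only [LinearMap.sub_apply, LinearMap.smul_apply, Module.End.one_apply, hD,
          sub_lie, lie_sub, smul_lie, lie_smul, smul_sub, smul_smul]
        module
      have h1 : ((D - l • (1 : Module.End ℂ L)) ^ n) ((D - l • 1) x) = 0 := by
        rw [← Module.End.mul_apply, ← pow_succ]; exact hx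
      have h2 : ((D - m • (1 : Module.End ℂ L)) ^ p) ((D - m • 1) y) = 0 := by
        rw [← Module.End.mul_apply, ← pow_succ]; exact hy
      have e1 : ((D - (δ * (l + m)) • 1) ^ k) ⁅(D - l • (1 : Module.End ℂ L)) x, y⁆ = 0 :=
        ih n (p + 1) _ _ (by omega) h1 hy
      have e2 : ((D - (δ * (l + m)) • 1) ^ k) ⁅x, (D - m • (1 : Module.End ℂ L)) y⁆ = 0 :=
        ih (n + 1) p _ _ (by omega) hx h2
      rw [pow_succ, Module.End.mul_apply, hE, map_add, map_smul, map_smul, e1, e2]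
      simp

/-- Generalized eigenspaces bracket relation for δ-derivations. -/
lemma delta_bracket_mem (δ : ℂ) (D : Module.End ℂ L)
    (hD : ∀ x y : L, D ⁅x, y⁆ = δ • ⁅D x, y⁆ + δ • ⁅x, D y⁆) {l m : ℂ} {x y : L}
    (hx : x ∈ D.maxGenEigenspace l) (hy : y ∈ D.maxGenEigenspace m) :
    ⁅x, y⁆ ∈ D.maxGenEigenspace (δ * (l + m)) := by
  rw [Module.End.mem_maxGenEigenspace] at hx hy ⊢
  obtain ⟨n, hn⟩ := hx
  obtain ⟨p, hp⟩ := hy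
  exact ⟨n + p, delta_bracket_ker δ D hD l m (n + p) n p x y le_rfl hn hp⟩

end Aux

/-- For a non-nilpotent δ-derivation of a finite-dimensional perfect complex
Lie algebra, δ is algebraic over ℚ. -/
theorem delta_algebraic_of_non_nilpotent (L : Type*) [LieRing L]
    [LieAlgebra ℂ L] [FiniteDimensional ℂ L]
    (hperf : ⁅(⊤ : LieIdeal ℂ L), (⊤ : LieIdeal ℂ L)⁆ = ⊤)
    (δ : ℂ) (D : Module.End ℂ L)
    (hD : ∀ x y : L, D ⁅x, y⁆ = δ • ⁅D x, y⁆ + δ • ⁅x, D y⁆)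
    (hnil : ¬ IsNilpotent D) :
    IsAlgebraic ℚ δ := by
  classical
  set S : Set ℂ := {η | D.maxGenEigenspace η ≠ ⊥} with hS
  have htop : ⨆ η : ℂ, D.maxGenEigenspace η = ⊤ :=
    Module.End.iSup_maxGenEigenspace_eq_top D
  -- The big sup over "δ(l+m)" values
  set M : Submodule ℂ L :=
    ⨆ η ∈ {η : ℂ | ∃ l ∈ S, ∃ m ∈ S, η = δ * (l + m)}, D.maxGenEigenspace η with hMdef
  -- every bracket lies in M
  have hbracket : ∀ x y : L, ⁅x, y⁆ ∈ M := by
    have inner : ∀ (l : ℂ) (x : L), x ∈ D.maxGenEigenspace l → ∀ y : L, ⁅x, y⁆ ∈ M := by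
      intro l x hx y
      have hy : y ∈ ⨆ m : ℂ, D.maxGenEigenspace m := htop ▸ Submodule.mem_top
      refine Submodule.iSup_induction' (motive := fun z _ => ⁅x, z⁆ ∈ M) _
        (fun m z hz => ?_) ?_ (fun z w _ _ hz hw => ?_) hy
      · show ⁅x, z⁆ ∈ M
        by_cases hx0 : x = 0
        · rw [hx0, zero_lie]; exact M.zero_mem
        by_cases hz0 : z = 0
        · rw [hz0, lie_zero]; exact M.zero_mem
        have hlS : l ∈ S := fun hb => hx0 (by simpa [hb] using hx)
        have hmS : m ∈ S := fun hb => hz0 (by simpa [hb] using hz)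
        have hmem : ⁅x, z⁆ ∈ D.maxGenEigenspace (δ * (l + m)) :=
          delta_bracket_mem δ D hD hx hz
        have hle : D.maxGenEigenspace (δ * (l + m)) ≤ M := by
          rw [hMdef]
          exact le_iSup₂ (f := fun η _ => D.maxGenEigenspace η) (δ * (l + m))
            ⟨l, hlS, m, hmS, rfl⟩
        exact hle hmem
      · show ⁅x, (0 : L)⁆ ∈ M
        rw [lie_zero]; exact M.zero_mem
      · show ⁅x, z + w⁆ ∈ M
        rw [lie_add]; exact M.add_mem hz hw
    intro x y
    have hx : x ∈ ⨆ l : ℂ, D.maxGenEigenspace l := htop ▸ Submodule.mem_top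
    refine Submodule.iSup_induction' (motive := fun z _ => ⁅z, y⁆ ∈ M) _
      (fun l z hz => inner l z hz y) ?_ (fun z w _ _ hz hw => ?_) hx
    · show ⁅(0 : L), y⁆ ∈ M
      rw [zero_lie]; exact M.zero_mem
    · show ⁅z + w, y⁆ ∈ M
      rw [add_lie]; exact M.add_mem hz hw
  -- hence ⊤ ≤ M by perfectness
  have hMtop : (⊤ : Submodule ℂ L) ≤ M := by
    have key := LieSubmodule.lieIdeal_oper_eq_linear_span' (R := ℂ) (L := L) (M := L)
      (I := ⊤) (N := ⊤)
    rw [hperf, LieSubmodule.top_toSubmodule] at key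
    rw [key]
    refine Submodule.span_le.mpr ?_
    rintro z ⟨x, -, y, -, rfl⟩
    exact hbracket x y
  -- every spectral value η of D has the form δ(l+m)
  have hspec : ∀ η ∈ S, ∃ l ∈ S, ∃ m ∈ S, η = δ * (l + m) := by
    intro η hη
    by_contra hc
    have hdisj := Module.End.independent_maxGenEigenspace D η
    have hle : M ≤ ⨆ (j : ℂ) (_ : j ≠ η), D.maxGenEigenspace j := by
      rw [hMdef]
      refine iSup₂_le fun p hp => ?_
      refine le_iSup₂ (f := fun j (_ : j ≠ η) => D.maxGenEigenspace j) p ?_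
      rintro rfl; exact hc hp
    have h2 : D.maxGenEigenspace η ≤ ⨆ (j : ℂ) (_ : j ≠ η), D.maxGenEigenspace j :=
      le_trans (le_trans le_top hMtop) hle
    have h3 : D.maxGenEigenspace η ≤ ⊥ := le_trans (le_inf le_rfl h2) hdisj.le_bot
    exact hη (le_bot_iff.mp h3)
  -- there is a nonzero spectral value
  have hex : ∃ η ∈ S, η ≠ 0 := by
    by_contra hc
    push_neg at hc
    have h0 : (⊤ : Submodule ℂ L) ≤ D.maxGenEigenspace 0 := by
      rw [← htop]
      refine iSup_le fun η => ?_
      by_cases hb : D.maxGenEigenspace η = ⊥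
      · rw [hb]; exact bot_le
      · rw [hc η hb]
    set n := finrank ℂ L with hn
    have hker : ∀ x : L, (D ^ n) x = 0 := by
      intro x
      have hx : x ∈ D.maxGenEigenspace 0 := h0 Submodule.mem_top
      rw [Module.End.maxGenEigenspace_eq_genEigenspace_finrank,
        Module.End.mem_genEigenspace_nat] at hx
      simpa using hx
    exact hnil ⟨n, by ext x; exact hker x⟩
  obtain ⟨η₀, hη₀S, hη₀⟩ := hex
  -- δ = 0 case is trivial
  by_cases hδ : δ = 0
  · rw [hδ]; exact isAlgebraic_zero
  -- S is finite
  have hSfin : S.Finite := by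
    refine (Module.End.finite_spectrum D).subset fun η hη => ?_
    rw [← Module.End.hasEigenvalue_iff_mem_spectrum]
    refine Module.End.hasEigenvalue_of_hasGenEigenvalue (k := finrank ℂ L) ?_
    have : D.genEigenspace η (finrank ℂ L) ≠ ⊥ := by
      rw [← Module.End.maxGenEigenspace_eq_genEigenspace_finrank]; exact hη
    exact this
  -- the rational span of S
  set V : Submodule ℚ ℂ := Submodule.span ℚ S with hV
  haveI : FiniteDimensional ℚ V := FiniteDimensional.span_of_finite ℚ hSfin
  set g : ℂ →ₗ[ℚ] ℂ := LinearMap.mulLeft ℚ δ with hg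
  have hginj : Function.Injective g := fun a b hab => by
    have : δ * a = δ * b := hab
    exact mul_left_cancel₀ hδ this
  have hVle : V ≤ V.map g := by
    rw [hV]
    refine Submodule.span_le.mpr fun η hη => ?_
    obtain ⟨l, hl, m, hm, rfl⟩ := hspec η hη
    refine ⟨l + m, ?_, rfl⟩
    exact Submodule.add_mem _ (Submodule.subset_span hl) (Submodule.subset_span hm)
  have hfr : finrank ℚ (V.map g) = finrank ℚ V :=
    (Submodule.equivMapOfInjective g hginj V).finrank_eq.symm
  haveI : FiniteDimensional ℚ (V.map g) :=
    Module.Finite.equiv (Submodule.equivMapOfInjective g hginj V)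
  have hVeq : V = V.map g := Submodule.eq_of_le_of_finrank_le hVle hfr.le
  have hmaps : ∀ x ∈ V, g x ∈ V := fun x hx => by
    rw [hVeq]; exact Submodule.mem_map_of_mem hx
  set f : V →ₗ[ℚ] V := g.restrict hmaps with hf
  have hpow : ∀ (n : ℕ) (w : V), (((f ^ n) w : V) : ℂ) = δ ^ n * (w : ℂ) := by
    intro n
    induction n with
    | zero => intro w; simp
    | succ n ih =>
      intro w
      rw [pow_succ, Module.End.mul_apply, ih]
      have : ((f w : V) : ℂ) = δ * (w : ℂ) := rfl
      rw [this]; ring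
  have heval : ∀ (q : ℚ[X]) (w : V), (((aeval f q) w : V) : ℂ) = (aeval δ q) * (w : ℂ) := by
    intro q
    induction q using Polynomial.induction_on with
    | C a =>
      intro w
      simp only [aeval_C]
      have h1 : (algebraMap ℚ (Module.End ℚ V) a) w = a • w := rfl
      rw [h1, Submodule.coe_smul]
      rw [Rat.smul_def, eq_ratCast (algebraMap ℚ ℂ) a]
    | add p q hp hq =>
      intro w
      simp only [map_add, LinearMap.add_apply, Submodule.coe_add, hp, hq, add_mul]
    | monomial n a _ =>
      intro w
      have h1 : aeval f (C a * X ^ (n + 1)) = a • (f ^ (n + 1)) := by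
        simp [Algebra.smul_def]
      have h2 : (aeval δ) (C a * X ^ (n + 1)) = (a : ℂ) * δ ^ (n + 1) := by
        simp [eq_ratCast (algebraMap ℚ ℂ) a]
      rw [h1, h2, LinearMap.smul_apply, Submodule.coe_smul, Rat.smul_def, hpow]
      ring
  -- apply the characteristic polynomial of f to η₀
  have hη₀V : η₀ ∈ V := Submodule.subset_span hη₀S
  set v : V := ⟨η₀, hη₀V⟩ with hv
  have hchar : aeval f (LinearMap.charpoly f) = 0 := LinearMap.aeval_self_charpoly f
  have hzero : (aeval δ (LinearMap.charpoly f)) * η₀ = 0 := by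
    have := heval (LinearMap.charpoly f) v
    rw [hchar] at this
    simpa [hv] using this.symm
  have hne : LinearMap.charpoly f ≠ 0 := (LinearMap.charpoly_monic f).ne_zero
  refine ⟨LinearMap.charpoly f, hne, ?_⟩
  rcases mul_eq_zero.mp hzero with h | h
  · exact h
  · exact absurd h hη₀
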